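/- arXiv:gr-qc/0703023 — 2 statements merged into one kernel-verified Lean document; each statement's English description precedes it below -/
import Mathlib

section
/- Let M > 0, m_e ≥ 0, κ = k + 1/2 with k ∈ ℤ, λ ∈ ℝ. Let r : ℝ → (M, ∞) be the inverse of the tortoise map u(r) = r + 2M log(r − M) − 2M²/(r − M), and let P(r) = [[−κΩ(r) − m_e r γ(r), −λγ(r)],[−λγ(r), −κΩ(r) + m_e r γ(r)]] with Ω(r) = M/(r² + M²), γ(r) = (r − M)/(r² + M²), and P₀ = [[−m_e, 0],[0, m_e]]. Then for every d > 0, lim_{x → +∞} (1/x) ∫_d^x ‖P(r(u)) − P₀‖ du = 0, where ‖·‖ denotes the operator norm on 2×2 complex matrices. -/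
open Set Filter Topology MeasureTheory
open scoped Matrix.Norms.L2Operator

/-- The tortoise coordinate `u(r) = r + 2M log(r − M) − 2M²/(r − M)`. -/
noncomputable def tortoise (M r : ℝ) : ℝ :=
  r + 2 * M * Real.log (r - M) - 2 * M ^ 2 / (r - M)

/-- `Ω(r) = M/(r² + M²)`. -/
noncomputable def OmegaF (M r : ℝ) : ℝ := M / (r ^ 2 + M ^ 2)

/-- `γ(r) = (r − M)/(r² + M²)`. -/
noncomputable def gam (M r : ℝ) : ℝ := (r - M) / (r ^ 2 + M ^ 2)

/-- The potential matrix, with complex entries so that the `L²` operator norm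
(`open scoped Matrix.L2OpNorm`) is available. -/
noncomputable def Pmat (M me κ lam r : ℝ) : Matrix (Fin 2) (Fin 2) ℂ :=
  !![((-(κ * OmegaF M r) - me * r * gam M r : ℝ) : ℂ), ((-(lam * gam M r) : ℝ) : ℂ);
     ((-(lam * gam M r) : ℝ) : ℂ), ((-(κ * OmegaF M r) + me * r * gam M r : ℝ) : ℂ)]

/-- Cesàro means of a continuous nonnegative function tending to `0` tend to `0`. -/
lemma cesaro_integral_aux {g : ℝ → ℝ} (hg : Continuous g) (hg0 : ∀ u, 0 ≤ g u)
    (hlim : Tendsto g atTop (𝓝 0)) (d : ℝ) :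
    Tendsto (fun x => (1 / x) * ∫ u in d..x, g u) atTop (𝓝 0) := by
  rw [NormedAddCommGroup.tendsto_nhds_zero]
  intro ε hε
  have h1 : ∀ᶠ u in atTop, g u < ε / 2 := hlim.eventually_lt_const (half_pos hε)
  obtain ⟨X0, hX0⟩ := eventually_atTop.mp h1
  set X : ℝ := max (max X0 d) 0 with hXdef
  have hdX : d ≤ X := le_max_of_le_left (le_max_right _ _)
  have hX0X : X0 ≤ X := le_max_of_le_left (le_max_left _ _)
  have hXnn : (0:ℝ) ≤ X := le_max_right _ _
  set C : ℝ := ∫ u in d..X, g u with hC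
  have hC0 : 0 ≤ C := intervalIntegral.integral_nonneg hdX fun u _ => hg0 u
  filter_upwards [eventually_ge_atTop X, eventually_gt_atTop (max 0 (2 * C / ε))]
    with x hx1 hx2
  have hx_pos : 0 < x := lt_of_le_of_lt (le_max_left _ _) hx2
  have hxC : 2 * C / ε < x := lt_of_le_of_lt (le_max_right _ _) hx2
  have hxC' : 2 * C < x * ε := by
    have := (div_lt_iff₀ hε).mp hxC
    linarith
  have hsplit : ∫ u in d..x, g u = C + ∫ u in X..x, g u :=
    (intervalIntegral.integral_add_adjacent_intervals (hg.intervalIntegrable (μ := volume) d X)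
      (hg.intervalIntegrable (μ := volume) X x)).symm
  have hbound : ∫ u in X..x, g u ≤ (x - X) * ε / 2 := by
    have h := intervalIntegral.integral_mono_on hx1 (hg.intervalIntegrable (μ := volume) X x)
      (intervalIntegrable_const (c := ε / 2)) (fun u hu => (hX0 u (hX0X.trans hu.1)).le)
    simpa [intervalIntegral.integral_const, smul_eq_mul] using h
  have hnn : 0 ≤ ∫ u in d..x, g u :=
    intervalIntegral.integral_nonneg (hdX.trans hx1) fun u _ => hg0 u
  have key : ∫ u in d..x, g u ≤ C + x * (ε / 2) := by
    rw [hsplit]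
    nlinarith
  have hxinv : 0 < 1 / x := by positivity
  rw [Real.norm_eq_abs, abs_of_nonneg (by positivity)]
  have h2 : (1 / x) * (∫ u in d..x, g u) ≤ (1 / x) * (C + x * (ε / 2)) :=
    mul_le_mul_of_nonneg_left key hxinv.le
  have h3 : (1 / x) * (C + x * (ε / 2)) < ε := by
    have hxx : x * (1 / x) = 1 := mul_one_div_cancel hx_pos.ne'
    nlinarith
  linarith

lemma tortoise_strictMonoOn {M : ℝ} (hM : 0 < M) : StrictMonoOn (tortoise M) (Ioi M) := by
  intro a ha b hb hab
  have haM : 0 < a - M := sub_pos.mpr ha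
  have h1 : Real.log (a - M) < Real.log (b - M) := Real.log_lt_log haM (by linarith)
  have h2 : 2 * M ^ 2 / (b - M) < 2 * M ^ 2 / (a - M) :=
    div_lt_div_of_pos_left (by positivity) haM (by linarith)
  have h3 := mul_lt_mul_of_pos_left h1 (show (0:ℝ) < 2 * M by positivity)
  simp only [tortoise]
  linarith

/-- For every `d > 0`,
`(1/x) ∫_d^x ‖P(r(u)) − P₀‖ du → 0` as `x → +∞`, where `r(u)` is the inverse of the
tortoise map, `P₀ = diag(−m_e, m_e)` and `‖·‖` is the `L²` operator norm on `2×2`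
complex matrices. -/
theorem Pmat_cesaro_mean_infinity
    (M me lam : ℝ) (k : ℤ) (hM : 0 < M) (hme : 0 ≤ me)
    (κ : ℝ) (hκ : κ = (k : ℝ) + 1 / 2)
    (rr : ℝ → ℝ) (hrr_mem : ∀ u, rr u ∈ Ioi M)
    (hrr_right : ∀ u, tortoise M (rr u) = u)
    (hrr_left : ∀ r ∈ Ioi M, rr (tortoise M r) = r)
    (d : ℝ) (hd : 0 < d) :
    Tendsto
      (fun x => (1 / x) *
        ∫ u in d..x, ‖Pmat M me κ lam (rr u) - !![((-me : ℝ) : ℂ), 0; 0, ((me : ℝ) : ℂ)]‖)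
      atTop (𝓝 0) := by
  have hM2 : ∀ r : ℝ, (0:ℝ) < r ^ 2 + M ^ 2 := fun r => by positivity
  -- rr is strictly monotone
  have hmono : Monotone rr := by
    intro u v huv
    by_contra h
    push_neg at h
    have := tortoise_strictMonoOn hM (hrr_mem v) (hrr_mem u) h
    rw [hrr_right, hrr_right] at this
    exact absurd huv (not_le.mpr this)
  have hinj : Function.Injective rr := fun a b hab => by
    have := congrArg (tortoise M) hab
    rwa [hrr_right, hrr_right] at this
  have hsm : StrictMono rr := hmono.strictMono_of_injective hinj
  -- rr is continuous
  have hcont : Continuous rr := by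
    set f : ℝ → Ioi M := fun u => ⟨rr u, hrr_mem u⟩ with hf
    have hsm' : StrictMono f := fun a b hab => hsm hab
    have hsurj' : Function.Surjective f := fun r =>
      ⟨tortoise M r.1, Subtype.ext (hrr_left r.1 r.2)⟩
    exact continuous_subtype_val.comp (StrictMono.orderIsoOfSurjective f hsm' hsurj').continuous
  -- rr tends to infinity
  have htop : Tendsto rr atTop atTop := by
    rw [tendsto_atTop_atTop]
    intro R
    refine ⟨tortoise M (max R (M + 1)), fun u hu => ?_⟩
    have hmem : max R (M + 1) ∈ Ioi M := by
      simp only [mem_Ioi]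
      exact lt_of_lt_of_le (by linarith) (le_max_right _ _)
    calc R ≤ max R (M + 1) := le_max_left _ _
      _ = rr (tortoise M (max R (M + 1))) := (hrr_left _ hmem).symm
      _ ≤ rr u := hmono hu
  -- limits of the coefficient functions
  have hΩ : Tendsto (fun r => OmegaF M r) atTop (𝓝 0) := by
    simp only [OmegaF]
    exact Tendsto.div_atTop tendsto_const_nhds
      (tendsto_atTop_add_const_right _ _ (tendsto_pow_atTop two_ne_zero))
  have hMr : Tendsto (fun r : ℝ => M / r) atTop (𝓝 0) :=
    Tendsto.div_atTop tendsto_const_nhds tendsto_id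
  have hMr2 : Tendsto (fun r : ℝ => M ^ 2 / r ^ 2) atTop (𝓝 0) :=
    Tendsto.div_atTop tendsto_const_nhds (tendsto_pow_atTop two_ne_zero)
  have hγ : Tendsto (fun r => gam M r) atTop (𝓝 0) := by
    have hnum : Tendsto (fun r : ℝ => 1 - M / r) atTop (𝓝 1) := by
      simpa using tendsto_const_nhds.sub hMr
    have hden : Tendsto (fun r : ℝ => r + M ^ 2 / r) atTop atTop :=
      tendsto_id.atTop_add (Tendsto.div_atTop (f := fun _ => M ^ 2)
        tendsto_const_nhds tendsto_id)
    have h := Tendsto.div_atTop hnum hden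
    apply h.congr'
    filter_upwards [eventually_gt_atTop (0:ℝ)] with r hr
    have hden2 : 0 < r + M ^ 2 / r := by positivity
    simp only [gam]
    rw [div_eq_div_iff hden2.ne' (hM2 r).ne']
    field_simp
  have hrγ : Tendsto (fun r => r * gam M r) atTop (𝓝 1) := by
    have hnum : Tendsto (fun r : ℝ => 1 - M / r) atTop (𝓝 1) := by
      simpa using tendsto_const_nhds.sub hMr
    have hden : Tendsto (fun r : ℝ => 1 + M ^ 2 / r ^ 2) atTop (𝓝 1) := by
      simpa using tendsto_const_nhds.add hMr2
    have h := hnum.div hden one_ne_zero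
    rw [div_one] at h
    apply h.congr'
    filter_upwards [eventually_gt_atTop (0:ℝ)] with r hr
    have h1 : r ^ 2 + M ^ 2 ≠ 0 := (hM2 r).ne'
    simp only [gam, Pi.div_apply]
    field_simp
  -- the matrix-valued function tends to 0
  set P₀ : Matrix (Fin 2) (Fin 2) ℂ := !![((-me : ℝ) : ℂ), 0; 0, ((me : ℝ) : ℂ)] with hP₀
  have A := hΩ.comp htop
  have B := hrγ.comp htop
  have Cg := hγ.comp htop
  have ofRealT : ∀ {f : ℝ → ℝ}, Tendsto f atTop (𝓝 0) →
      Tendsto (fun u => ((f u : ℝ) : ℂ)) atTop (𝓝 0) := by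
    intro f hf
    have := (Complex.continuous_ofReal.tendsto 0).comp hf
    exact this
  have hmat : Tendsto (fun u => Pmat M me κ lam (rr u) - P₀) atTop (𝓝 0) := by
    refine tendsto_pi_nhds.mpr ?_
    intro i
    rw [tendsto_pi_nhds]
    intro j
    have h00 : Tendsto
        (fun u => -(κ * OmegaF M (rr u)) - me * rr u * gam M (rr u) - -me) atTop (𝓝 0) := by
      have h := ((A.const_mul κ).neg.sub (B.const_mul me)).sub_const (-me)
      simp only [Function.comp_def] at h
      have h' : Tendsto
          (fun u => -(κ * OmegaF M (rr u)) - me * (rr u * gam M (rr u)) - -me) atTop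
          (𝓝 (-(κ * 0) - me * 1 - -me)) := h
      simpa [mul_assoc] using h'
    have h01 : Tendsto (fun u => -(lam * gam M (rr u)) - 0) atTop (𝓝 0) := by
      have h := (Cg.const_mul lam).neg.sub_const 0
      simp only [Function.comp_def] at h
      simpa using h
    have h11 : Tendsto
        (fun u => -(κ * OmegaF M (rr u)) + me * rr u * gam M (rr u) - me) atTop (𝓝 0) := by
      have h := ((A.const_mul κ).neg.add (B.const_mul me)).sub_const me
      simp only [Function.comp_def] at h
      have h' : Tendsto
          (fun u => -(κ * OmegaF M (rr u)) + me * (rr u * gam M (rr u)) - me) atTop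
          (𝓝 (-(κ * 0) + me * 1 - me)) := h
      simpa [mul_assoc] using h'
    fin_cases i <;> fin_cases j <;>
      simp only [Pmat, hP₀, Matrix.sub_apply, Matrix.cons_val', Matrix.cons_val_zero,
        Matrix.cons_val_one, Matrix.head_cons, Matrix.empty_val', Matrix.cons_val_fin_one,
        Matrix.head_fin_const, Fin.isValue, Fin.zero_eta, Fin.mk_one]
    · simpa using ofRealT h00
    · simpa using ofRealT h01
    · simpa using ofRealT h01
    · simpa using ofRealT h11
  have hnorm : Tendsto (fun u => ‖Pmat M me κ lam (rr u) - P₀‖) atTop (𝓝 0) := by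
    have h := (continuous_norm.tendsto (0 : Matrix (Fin 2) (Fin 2) ℂ)).comp hmat
    simpa [Function.comp_def] using h
  have hOc : Continuous fun r : ℝ => OmegaF M r :=
    continuous_const.div (by continuity) fun r => (hM2 r).ne'
  have hγc : Continuous fun r : ℝ => gam M r :=
    (continuous_id.sub continuous_const).div (by continuity) fun r => (hM2 r).ne'
  have e1 : Continuous fun u => OmegaF M (rr u) := hOc.comp hcont
  have e2 : Continuous fun u => gam M (rr u) := hγc.comp hcont
  have hgcont : Continuous fun u => ‖Pmat M me κ lam (rr u) - P₀‖ := by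
    apply continuous_norm.comp
    apply Continuous.sub _ continuous_const
    apply continuous_pi
    intro i
    apply continuous_pi
    intro j
    fin_cases i <;> fin_cases j <;>
      simp only [Pmat, Matrix.cons_val', Matrix.cons_val_zero, Matrix.cons_val_one,
        Matrix.head_cons, Matrix.empty_val', Matrix.cons_val_fin_one, Matrix.head_fin_const,
        Fin.isValue, Fin.zero_eta, Fin.mk_one]
    · exact Complex.continuous_ofReal.comp
        (((continuous_const.mul e1).neg).sub ((continuous_const.mul hcont).mul e2))
    · exact Complex.continuous_ofReal.comp (continuous_const.mul e2).neg
    · exact Complex.continuous_ofReal.comp (continuous_const.mul e2).neg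
    · exact Complex.continuous_ofReal.comp
        (((continuous_const.mul e1).neg).add ((continuous_const.mul hcont).mul e2))
  exact cesaro_integral_aux hgcont (fun u => norm_nonneg _) hnorm d
end

section
/- Let M > 0, m_e ≥ 0, κ = k + 1/2 with k ∈ ℤ, λ ∈ ℝ. Let r : ℝ → (M, ∞) be the inverse of the tortoise map u(r) = r + 2M log(r − M) − 2M²/(r − M), and let P(r) = [[−κΩ(r) − m_e r γ(r), −λγ(r)],[−λγ(r), −κΩ(r) + m_e r γ(r)]] with Ω(r) = M/(r² + M²), γ(r) = (r − M)/(r² + M²), and P₁ = −(κ/(2M)) I₂. Then for every δ < 0, lim_{y → −∞} (1/|y|) ∫_y^δ ‖P(r(u)) − P₁‖ du = 0, where ‖·‖ denotes the operator norm on 2×2 complex matrices. -/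
open Set Filter Topology MeasureTheory
open scoped Matrix.Norms.L2Operator

/-- derivative of tortoise -/
lemma tortoise_hasDerivAt {M r : ℝ} (hr : M < r) :
    HasDerivAt (tortoise M) (1 + 2 * M / (r - M) + 2 * M ^ 2 / (r - M) ^ 2) r := by
  have hne : r - M ≠ 0 := by linarith
  have h1 : HasDerivAt (fun x : ℝ => x - M) 1 r := (hasDerivAt_id r).sub_const M
  have hlog : HasDerivAt (fun x : ℝ => Real.log (x - M)) (1 / (r - M)) r := by
    simpa using h1.log hne
  have hinv : HasDerivAt (fun x : ℝ => (x - M)⁻¹) (-1 / (r - M) ^ 2) r := by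
    exact h1.inv hne
  have : HasDerivAt (tortoise M)
      (1 + 2 * M * (1 / (r - M)) - 2 * M ^ 2 * (-1 / (r - M) ^ 2)) r := by
    unfold tortoise
    simp only [div_eq_mul_inv]
    exact ((hasDerivAt_id r).add (hlog.const_mul (2 * M))).sub (hinv.const_mul (2 * M ^ 2))
  convert this using 1
  field_simp
  ring

section Cesaro

lemma cesaro_aux (f : ℝ → ℝ) (hfc : Continuous f) (hf0 : ∀ x, 0 ≤ f x)
    (hlim : Tendsto f atBot (𝓝 0)) (δ : ℝ) (hδ : δ < 0) :
    Tendsto (fun y => (1 / |y|) * ∫ u in y..δ, f u) atBot (𝓝 0) := by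
  rw [Metric.tendsto_nhds]
  intro ε hε
  have hε3 : 0 < ε / 3 := by positivity
  obtain ⟨A₀, hA₀⟩ := eventually_atBot.mp (Metric.tendsto_nhds.mp hlim (ε / 3) hε3)
  set A := min A₀ δ with hA_def
  have hAδ : A ≤ δ := min_le_right _ _
  have hA0 : A < 0 := lt_of_le_of_lt hAδ hδ
  have hA : ∀ x ≤ A, f x ≤ ε / 3 := by
    intro x hx
    have := hA₀ x (le_trans hx (min_le_left _ _))
    rw [Real.dist_eq, sub_zero] at this
    exact le_of_lt (lt_of_le_of_lt (le_abs_self _) this)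
  set C := ∫ u in A..δ, f u with hC_def
  have hC0 : 0 ≤ C := intervalIntegral.integral_nonneg hAδ (fun x _ => hf0 x)
  refine eventually_atBot.mpr ⟨min A (-(3 * C / ε) - 1), fun y hy => ?_⟩
  have hyA : y ≤ A := le_trans hy (min_le_left _ _)
  have hy1 : y ≤ -(3 * C / ε) - 1 := le_trans hy (min_le_right _ _)
  have hy0 : y < 0 := lt_of_le_of_lt hyA hA0
  have hny : 0 < -y := by linarith
  have hnylb : 3 * C / ε + 1 ≤ -y := by linarith
  have habs : |y| = -y := abs_of_neg hy0
  have hi1 : IntervalIntegrable f volume y A := hfc.intervalIntegrable y A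
  have hi2 : IntervalIntegrable f volume A δ := hfc.intervalIntegrable A δ
  have hsplit : (∫ u in y..δ, f u) = (∫ u in y..A, f u) + C :=
    (intervalIntegral.integral_add_adjacent_intervals hi1 hi2).symm
  have hI1le : (∫ u in y..A, f u) ≤ (A - y) * ε / 3 := by
    have := intervalIntegral.integral_mono_on hyA hi1 (intervalIntegrable_const (c := ε / 3))
      (fun x hx => hA x hx.2)
    simpa [smul_eq_mul] using this
  have hI1nn : 0 ≤ (∫ u in y..A, f u) := intervalIntegral.integral_nonneg hyA (fun x _ => hf0 x)
  have hInn : 0 ≤ (∫ u in y..δ, f u) := by rw [hsplit]; linarith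
  have hterm_nn : 0 ≤ (1 / |y|) * ∫ u in y..δ, f u := by positivity
  rw [Real.dist_eq, sub_zero, abs_of_nonneg hterm_nn]
  have hIle : (∫ u in y..δ, f u) ≤ (-y) * (ε / 3) + C := by
    rw [hsplit]
    have : (A - y) * ε / 3 ≤ (-y) * (ε / 3) := by nlinarith
    linarith
  have h1 : (1 / |y|) * (∫ u in y..δ, f u) ≤ ε / 3 + C / (-y) := by
    rw [habs]
    rw [div_mul_eq_mul_div, one_mul]  -- (∫)/( -y)
    have hyne : y ≠ 0 := ne_of_lt hy0
    rw [div_le_iff₀ hny]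
    have : (ε / 3 + C / (-y)) * (-y) = (-y) * (ε / 3) + C := by
      field_simp
      ring
    rw [this]
    exact hIle
  have h2 : C / (-y) < ε / 3 := by
    have hD : 0 < 3 * C / ε + 1 := by positivity
    have : C / (-y) ≤ C / (3 * C / ε + 1) := div_le_div_of_nonneg_left hC0 hD hnylb
    refine lt_of_le_of_lt this ?_
    rw [div_lt_iff₀ hD]
    have : ε / 3 * (3 * C / ε + 1) = C + ε / 3 := by field_simp
    rw [this]
    linarith
  linarith

end Cesaro

/-- For every `δ < 0`,
`(1/|y|) ∫_y^δ ‖P(r(u)) − P₁‖ du → 0` as `y → −∞`, where `r(u)` is the inverse of the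
tortoise map, `P₁ = −(κ/(2M))·I₂` and `‖·‖` is the `L²` operator norm on `2×2` complex
matrices. -/
theorem Pmat_cesaro_mean_horizon
    (M me lam : ℝ) (k : ℤ) (hM : 0 < M) (hme : 0 ≤ me)
    (κ : ℝ) (hκ : κ = (k : ℝ) + 1 / 2)
    (rr : ℝ → ℝ) (hrr_mem : ∀ u, rr u ∈ Ioi M)
    (hrr_right : ∀ u, tortoise M (rr u) = u)
    (hrr_left : ∀ r ∈ Ioi M, rr (tortoise M r) = r)
    (δ : ℝ) (hδ : δ < 0) :
    Tendsto
      (fun y => (1 / |y|) *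
        ∫ u in y..δ,
          ‖Pmat M me κ lam (rr u) -
            ((-(κ / (2 * M)) : ℝ) : ℂ) • (1 : Matrix (Fin 2) (Fin 2) ℂ)‖)
      atBot (𝓝 0) := by
  have hmono_t := tortoise_strictMonoOn hM
  -- rr is monotone
  have hrr_mono : Monotone rr := by
    intro u v huv
    by_contra h
    push_neg at h
    have h2 := hmono_t (hrr_mem v) (hrr_mem u) h
    rw [hrr_right, hrr_right] at h2
    have : rr u = rr v := by
      have : u = v := le_antisymm huv (le_of_lt h2)
      rw [this]
    linarith [h, this.ge]
  -- rr is continuous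
  have hrr_cont : Continuous rr := by
    have hsurj : Function.Surjective (fun u => (⟨rr u, hrr_mem u⟩ : Ioi M)) := by
      rintro ⟨r, hr⟩
      exact ⟨tortoise M r, Subtype.ext (hrr_left r hr)⟩
    have hmono' : Monotone (fun u => (⟨rr u, hrr_mem u⟩ : Ioi M)) := by
      intro u v huv
      exact Subtype.mk_le_mk.mpr (hrr_mono huv)
    have := hmono'.continuous_of_surjective hsurj
    exact continuous_subtype_val.comp this
  -- rr tends to M at -∞
  have hrrM : Tendsto rr atBot (𝓝 M) := by
    rw [Metric.tendsto_nhds]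
    intro ε hε
    have hmem : M + ε / 2 ∈ Ioi M := by simp only [mem_Ioi]; linarith
    refine eventually_atBot.mpr ⟨tortoise M (M + ε / 2), fun u hu => ?_⟩
    have h1 : rr u ≤ M + ε / 2 := by
      have := hrr_mono hu
      rwa [hrr_left _ hmem] at this
    have h2 : M < rr u := hrr_mem u
    rw [Real.dist_eq, abs_of_pos (by linarith)]
    linarith
  set c : ℂ := ((-(κ / (2 * M)) : ℝ) : ℂ) with hc_def
  set F : ℝ → Matrix (Fin 2) (Fin 2) ℂ :=
    fun r => Pmat M me κ lam r - c • (1 : Matrix (Fin 2) (Fin 2) ℂ) with hF_def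
  have hMne : M ≠ 0 := ne_of_gt hM
  have hgam : gam M M = 0 := by simp [gam]
  have hOm : OmegaF M M = 1 / (2 * M) := by
    unfold OmegaF
    field_simp
    ring
  have hFM : F M = 0 := by
    ext i j
    fin_cases i <;> fin_cases j <;>
      simp [F, Pmat, hgam, hOm, Matrix.one_apply, Matrix.smul_apply, hc_def] <;>
      push_cast <;> ring
  have hden : ∀ r : ℝ, r ^ 2 + M ^ 2 ≠ 0 := fun r => by positivity
  have hΩc : Continuous (OmegaF M) := continuous_const.div (by fun_prop) hden
  have hγc : Continuous (gam M) :=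
    (continuous_id.sub continuous_const).div (by fun_prop) hden
  have hFc : Continuous F := by
    apply continuous_matrix
    intro i j
    have he0 : Continuous fun r : ℝ => ((-(κ * OmegaF M r) - me * r * gam M r : ℝ) : ℂ) := by
      fun_prop
    have he1 : Continuous fun r : ℝ => ((-(lam * gam M r) : ℝ) : ℂ) := by fun_prop
    have he2 : Continuous fun r : ℝ => ((-(κ * OmegaF M r) + me * r * gam M r : ℝ) : ℂ) := by
      fun_prop
    fin_cases i <;> fin_cases j <;>
      · simp only [F, Pmat]
        simp only [Fin.isValue, Matrix.cons_val', Matrix.cons_val_zero, Matrix.cons_val_one,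
          Matrix.head_cons, Matrix.head_fin_const, Matrix.empty_val', Matrix.cons_val_fin_one,
          Matrix.of_apply, Fin.mk_zero, Fin.mk_one, Matrix.sub_apply]
        exact Continuous.sub (by first | exact he0 | exact he1 | exact he2) continuous_const
  have key : Tendsto (fun u => ‖F (rr u)‖) atBot (𝓝 0) := by
    have h1 : Continuous fun r => ‖F r‖ := hFc.norm
    have h2 := (h1.tendsto M).comp hrrM
    simpa [hFM, Function.comp_def] using h2
  have hfc : Continuous fun u => ‖F (rr u)‖ := hFc.norm.comp hrr_cont
  exact cesaro_aux _ hfc (fun x => norm_nonneg _) key δ hδ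
end
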